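/- arXiv:1612.07262 — 3 statements merged into one kernel-verified Lean document; each statement's English description precedes it below -/
import Mathlib

section
/- Let α ∈ [0,4] and θ_α = arccos(α/4). Then the crease energy C_α, defined as the infimum over N ∈ ℕ and over maps θ : ℤ → [−π/2, π/2] satisfying θ^i = sign(i)·θ_α for all |i| ≥ N of Σ_{i∈ℤ} [cos(θ^i + θ^{i+1}) − (α/2)(cos θ^i + cos θ^{i+1}) − m_α], coincides with the infimum of the same sum over all maps θ : ℤ → [−π/2, π/2] satisfying only the conditions at infinity lim_{i→+∞} θ^i = θ_α and lim_{i→−∞} θ^i = −θ_α. -/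
open Real MeasureTheory Filter Topology
open scoped ENNReal

noncomputable section

/-- The minimal angle `θ_α = arccos (α/4)`. -/
def thetaMin (α : ℝ) : ℝ := Real.arccos (α / 4)

/-- A single summand of the crease (transition) energy. -/
def creaseSummand (α : ℝ) (θ : ℤ → ℝ) (i : ℤ) : ℝ :=
  Real.cos (θ i + θ (i + 1)) - α / 2 * (Real.cos (θ i) + Real.cos (θ (i + 1)))
    + α ^ 2 / 8 + 1

/-- The (nonnegative-termed) sum over `ℤ`, with values in `[0, ∞]`. -/
def creaseSum (α : ℝ) (θ : ℤ → ℝ) : ℝ≥0∞ :=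
  ∑' i : ℤ, ENNReal.ofReal (creaseSummand α θ i)

/-- The crease energy `C_α`: infimum over `N ∈ ℕ` and maps `θ : ℤ → [−π/2, π/2]` with
`θ^i = sign i · θ_α` for `|i| ≥ N` of the sum of the transition energy. -/
def crease (α : ℝ) : ℝ≥0∞ :=
  sInf { c : ℝ≥0∞ | ∃ (N : ℕ) (θ : ℤ → ℝ),
    (∀ i, θ i ∈ Set.Icc (-(π / 2)) (π / 2)) ∧
    (∀ i : ℤ, (N : ℤ) ≤ |i| → θ i = (i.sign : ℝ) * thetaMin α) ∧
    c = creaseSum α θ }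

lemma cos_thetaMin {α : ℝ} (hα : α ∈ Set.Icc (0:ℝ) 4) : Real.cos (thetaMin α) = α / 4 :=
  Real.cos_arccos (by linarith [hα.1]) (by linarith [hα.2])

lemma thetaMin_mem {α : ℝ} (hα : α ∈ Set.Icc (0:ℝ) 4) : thetaMin α ∈ Set.Icc 0 (π/2) :=
  ⟨Real.arccos_nonneg _, Real.arccos_le_pi_div_two.mpr (by linarith [hα.1])⟩

lemma F_zero {α : ℝ} (hα : α ∈ Set.Icc (0:ℝ) 4) {x : ℝ}
    (hx : x = thetaMin α ∨ x = -thetaMin α) :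
    Real.cos (x + x) - α / 2 * (Real.cos x + Real.cos x) + α ^ 2 / 8 + 1 = 0 := by
  have hc : Real.cos x = α / 4 := by
    rcases hx with rfl | rfl
    · exact cos_thetaMin hα
    · rw [Real.cos_neg]; exact cos_thetaMin hα
  have h2 : Real.cos (x + x) = 2 * (α/4)^2 - 1 := by
    rw [show x + x = 2*x by ring, Real.cos_two_mul, hc]
  rw [h2, hc]; ring

/-- the crease energy `C_α` coincides with the infimum of the same sum over
maps `θ : ℤ → [−π/2, π/2]` satisfying only `θ^i → θ_α` as `i → +∞` and `θ^i → −θ_α`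
as `i → −∞`. -/
theorem crease_energy_relaxed_boundary_condition (α : ℝ) (hα : α ∈ Set.Icc (0 : ℝ) 4) :
    crease α = sInf { c : ℝ≥0∞ | ∃ θ : ℤ → ℝ,
      (∀ i, θ i ∈ Set.Icc (-(π / 2)) (π / 2)) ∧
      Filter.Tendsto θ Filter.atTop (𝓝 (thetaMin α)) ∧
      Filter.Tendsto θ Filter.atBot (𝓝 (-thetaMin α)) ∧
      c = creaseSum α θ } := by
  have hθm := thetaMin_mem hα
  apply le_antisymm
  · -- hard direction: crease α ≤ relaxed infimum
    refine le_sInf ?_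
    rintro c ⟨θ, hmem, htop, hbot, rfl⟩
    refine ENNReal.le_of_forall_pos_le_add fun ε hε _ => ?_
    have hδ : (0:ℝ≥0∞) < (ε : ℝ≥0∞) / 2 :=
      ENNReal.half_pos (by exact_mod_cast hε.ne')
    -- continuity of the two boundary terms
    have hseq1 : Tendsto (fun n : ℕ => (-(n:ℤ) + 1)) atTop atBot :=
      tendsto_atBot.mpr fun b => eventually_atTop.mpr ⟨(1-b).toNat, fun n hn => by omega⟩
    have hseq2 : Tendsto (fun n : ℕ => ((n:ℤ) - 1)) atTop atTop :=
      tendsto_atTop.mpr fun b => eventually_atTop.mpr ⟨(b+1).toNat, fun n hn => by omega⟩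
    have hG : Continuous (fun y : ℝ => Real.cos (-thetaMin α + y)
        - α / 2 * (Real.cos (-thetaMin α) + Real.cos y) + α ^ 2 / 8 + 1) := by
      fun_prop
    have hH : Continuous (fun x : ℝ => Real.cos (x + thetaMin α)
        - α / 2 * (Real.cos x + Real.cos (thetaMin α)) + α ^ 2 / 8 + 1) := by
      fun_prop
    have hG0 : Real.cos (-thetaMin α + -thetaMin α)
        - α / 2 * (Real.cos (-thetaMin α) + Real.cos (-thetaMin α)) + α ^ 2 / 8 + 1 = 0 :=
      F_zero hα (Or.inr rfl)
    have hH0 : Real.cos (thetaMin α + thetaMin α)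
        - α / 2 * (Real.cos (thetaMin α) + Real.cos (thetaMin α)) + α ^ 2 / 8 + 1 = 0 :=
      F_zero hα (Or.inl rfl)
    have hT1 : Tendsto (fun n : ℕ => ENNReal.ofReal (Real.cos (-thetaMin α + θ (-(n:ℤ) + 1))
        - α / 2 * (Real.cos (-thetaMin α) + Real.cos (θ (-(n:ℤ) + 1))) + α ^ 2 / 8 + 1))
        atTop (𝓝 0) := by
      have := ENNReal.tendsto_ofReal ((hG.tendsto (-thetaMin α)).comp (hbot.comp hseq1))
      simp only [Function.comp] at this
      rwa [hG0, ENNReal.ofReal_zero] at this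
    have hT2 : Tendsto (fun n : ℕ => ENNReal.ofReal (Real.cos (θ ((n:ℤ) - 1) + thetaMin α)
        - α / 2 * (Real.cos (θ ((n:ℤ) - 1)) + Real.cos (thetaMin α)) + α ^ 2 / 8 + 1))
        atTop (𝓝 0) := by
      have := ENNReal.tendsto_ofReal ((hH.tendsto (thetaMin α)).comp (htop.comp hseq2))
      simp only [Function.comp] at this
      rwa [hH0, ENNReal.ofReal_zero] at this
    obtain ⟨N, hb1, hb2, hN2⟩ :=
      ((hT1.eventually_lt_const hδ).and ((hT2.eventually_lt_const hδ).and
        (eventually_ge_atTop 2))).exists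
    -- the truncated configuration
    set Θ : ℤ → ℝ := fun i => if |i| < (N:ℤ) then θ i else (i.sign : ℝ) * thetaMin α with hΘdef
    have hmemΘ : ∀ i, Θ i ∈ Set.Icc (-(π / 2)) (π / 2) := by
      intro i
      simp only [hΘdef]
      split
      · exact hmem i
      · rcases lt_trichotomy i 0 with h0 | h0 | h0
        · rw [Int.sign_eq_neg_one_of_neg h0]
          push_cast
          constructor <;> nlinarith [hθm.1, hθm.2, Real.pi_pos]
        · rw [h0, Int.sign_zero, Int.cast_zero, zero_mul]
          exact ⟨by linarith [Real.pi_pos], by linarith [Real.pi_pos]⟩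
        · rw [Int.sign_eq_one_of_pos h0]
          push_cast
          constructor <;> nlinarith [hθm.1, hθm.2, Real.pi_pos]
    have hfixΘ : ∀ i : ℤ, (N : ℤ) ≤ |i| → Θ i = (i.sign : ℝ) * thetaMin α := by
      intro i hi
      simp only [hΘdef]
      rw [if_neg (not_lt.mpr hi)]
    -- values of Θ
    have hfixpos : ∀ i : ℤ, (N:ℤ) ≤ i → Θ i = thetaMin α := by
      intro i hi
      have : Θ i = (i.sign : ℝ) * thetaMin α :=
        hfixΘ i (le_trans hi (le_abs_self i))
      rw [this, Int.sign_eq_one_of_pos (by omega)]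
      push_cast; ring
    have hfixneg : ∀ i : ℤ, i ≤ -(N:ℤ) → Θ i = -thetaMin α := by
      intro i hi
      have : Θ i = (i.sign : ℝ) * thetaMin α :=
        hfixΘ i (le_trans (by omega : (N:ℤ) ≤ -i) (neg_le_abs i))
      rw [this, Int.sign_eq_neg_one_of_neg (by omega)]
      push_cast; ring
    have hid : ∀ i : ℤ, -(N:ℤ) < i → i < (N:ℤ) → Θ i = θ i := by
      intro i h1 h2
      simp only [hΘdef]
      rw [if_pos (abs_lt.mpr ⟨by omega, h2⟩)]
    -- the sum for Θ is a finite sum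
    have hout : ∀ i : ℤ, i ∉ Finset.Icc (-(N:ℤ)) ((N:ℤ)-1) →
        ENNReal.ofReal (creaseSummand α Θ i) = 0 := by
      intro i hi
      rw [Finset.mem_Icc] at hi
      rcases (by omega : i ≤ -(N:ℤ)-1 ∨ (N:ℤ) ≤ i) with h | h
      · rw [creaseSummand, hfixneg i (by omega), hfixneg (i+1) (by omega),
          F_zero hα (Or.inr rfl), ENNReal.ofReal_zero]
      · rw [creaseSummand, hfixpos i h, hfixpos (i+1) (by omega),
          F_zero hα (Or.inl rfl), ENNReal.ofReal_zero]
    have hsum : creaseSum α Θ =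
        ∑ i ∈ Finset.Icc (-(N:ℤ)) ((N:ℤ)-1), ENNReal.ofReal (creaseSummand α Θ i) :=
      tsum_eq_sum hout
    have hsplit : Finset.Icc (-(N:ℤ)) ((N:ℤ)-1)
        = insert (-(N:ℤ)) (insert ((N:ℤ)-1) (Finset.Icc (-(N:ℤ)+1) ((N:ℤ)-2))) := by
      ext i
      simp only [Finset.mem_Icc, Finset.mem_insert]
      omega
    have hni1 : (-(N:ℤ)) ∉ insert ((N:ℤ)-1) (Finset.Icc (-(N:ℤ)+1) ((N:ℤ)-2)) := by
      simp only [Finset.mem_Icc, Finset.mem_insert]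
      omega
    have hni2 : ((N:ℤ)-1) ∉ Finset.Icc (-(N:ℤ)+1) ((N:ℤ)-2) := by
      simp only [Finset.mem_Icc]
      omega
    rw [hsplit, Finset.sum_insert hni1, Finset.sum_insert hni2] at hsum
    -- interior part is bounded by the full sum
    have hinterior : ∑ i ∈ Finset.Icc (-(N:ℤ)+1) ((N:ℤ)-2),
        ENNReal.ofReal (creaseSummand α Θ i) ≤ creaseSum α θ := by
      have hcongr : ∀ i ∈ Finset.Icc (-(N:ℤ)+1) ((N:ℤ)-2),
          ENNReal.ofReal (creaseSummand α Θ i) = ENNReal.ofReal (creaseSummand α θ i) := by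
        intro i hi
        rw [Finset.mem_Icc] at hi
        rw [creaseSummand, creaseSummand, hid i (by omega) (by omega),
          hid (i+1) (by omega) (by omega)]
      rw [Finset.sum_congr rfl hcongr]
      exact ENNReal.sum_le_tsum _
    -- boundary terms
    have e1 : creaseSummand α Θ (-(N:ℤ)) = Real.cos (-thetaMin α + θ (-(N:ℤ) + 1))
        - α / 2 * (Real.cos (-thetaMin α) + Real.cos (θ (-(N:ℤ) + 1))) + α ^ 2 / 8 + 1 := by
      rw [creaseSummand, hfixneg (-(N:ℤ)) le_rfl, hid (-(N:ℤ)+1) (by omega) (by omega)]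
    have e2 : creaseSummand α Θ ((N:ℤ)-1) = Real.cos (θ ((N:ℤ) - 1) + thetaMin α)
        - α / 2 * (Real.cos (θ ((N:ℤ) - 1)) + Real.cos (thetaMin α)) + α ^ 2 / 8 + 1 := by
      rw [creaseSummand, show (N:ℤ)-1+1 = (N:ℤ) by ring, hfixpos (N:ℤ) le_rfl,
        hid ((N:ℤ)-1) (by omega) (by omega)]
    calc crease α ≤ creaseSum α Θ := sInf_le ⟨N, Θ, hmemΘ, hfixΘ, rfl⟩
      _ = ENNReal.ofReal (creaseSummand α Θ (-(N:ℤ)))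
          + (ENNReal.ofReal (creaseSummand α Θ ((N:ℤ)-1))
          + ∑ i ∈ Finset.Icc (-(N:ℤ)+1) ((N:ℤ)-2), ENNReal.ofReal (creaseSummand α Θ i)) :=
        hsum
      _ ≤ (ε:ℝ≥0∞)/2 + ((ε:ℝ≥0∞)/2 + creaseSum α θ) := by
        refine add_le_add ?_ (add_le_add ?_ hinterior)
        · rw [e1]; exact hb1.le
        · rw [e2]; exact hb2.le
      _ = creaseSum α θ + ε := by
        rw [← add_assoc, ENNReal.add_halves, add_comm]
  · -- easy direction: every compactly fixed configuration satisfies the limit conditions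
    refine sInf_le_sInf ?_
    rintro c ⟨N, θ, hmem, hfix, rfl⟩
    refine ⟨θ, hmem, ?_, ?_, rfl⟩
    · refine Tendsto.congr' ?_ tendsto_const_nhds
      filter_upwards [eventually_ge_atTop (max (N:ℤ) 1)] with i hi
      have h1 : (1:ℤ) ≤ i := le_trans (le_max_right _ _) hi
      have hN : (N:ℤ) ≤ i := le_trans (le_max_left _ _) hi
      rw [hfix i (by rwa [abs_of_pos (by omega)]), Int.sign_eq_one_of_pos (by omega)]
      push_cast; ring
    · refine Tendsto.congr' ?_ tendsto_const_nhds
      filter_upwards [eventually_le_atBot (min (-(N:ℤ)) (-1))] with i hi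
      have h1 : i ≤ -1 := le_trans hi (min_le_right _ _)
      have hN : i ≤ -(N:ℤ) := le_trans hi (min_le_left _ _)
      rw [hfix i (by rw [abs_of_neg (by omega)]; omega),
        Int.sign_eq_neg_one_of_neg (by omega)]
      push_cast; ring
end
end

section
/- For every α ∈ [0,4) the crease energy C_α is strictly positive, where C_α is the infimum over N ∈ ℕ and over maps θ : ℤ → [−π/2, π/2] with θ^i = sign(i)·θ_α for all |i| ≥ N of Σ_{i∈ℤ} [cos(θ^i + θ^{i+1}) − (α/2)(cos θ^i + cos θ^{i+1}) − m_α]. -/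
open Real MeasureTheory Filter Topology
open scoped ENNReal

noncomputable section

/-- The one-pair energy. -/
def creaseF (α x y : ℝ) : ℝ :=
  Real.cos (x + y) - α / 2 * (Real.cos x + Real.cos y) + α ^ 2 / 8 + 1

lemma creaseF_eq (α x y : ℝ) :
    creaseF α x y =
      2 * (Real.cos ((x + y)/2) - α/4 * Real.cos ((x - y)/2))^2
        + α^2/8 * Real.sin ((x - y)/2)^2 := by
  have h1 := Real.cos_two_mul ((x+y)/2)
  rw [show 2*((x+y)/2) = x + y by ring] at h1
  have h2 := Real.cos_add_cos x y
  have h3 : Real.sin ((x-y)/2)^2 = 1 - Real.cos ((x-y)/2)^2 := Real.sin_sq _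
  unfold creaseF
  rw [h1, h2, h3]; ring

lemma creaseF_pos (α : ℝ) (h0 : 0 ≤ α) (h4 : α < 4) {x y : ℝ}
    (hx1 : -(π/2) ≤ x) (hx2 : x ≤ thetaMin α / 2)
    (hy1 : thetaMin α / 2 ≤ y) (hy2 : y ≤ π/2) :
    0 < creaseF α x y := by
  have hpi := Real.pi_pos
  have hT0 : 0 < thetaMin α := Real.arccos_pos.mpr (by linarith)
  have hTpi : thetaMin α ≤ π := Real.arccos_le_pi _
  have hcosT : Real.cos (thetaMin α) = α / 4 :=
    Real.cos_arccos (by linarith) (by linarith)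
  rw [creaseF_eq]
  have hT2 : thetaMin α ≤ π/2 := Real.arccos_le_pi_div_two.mpr (by linarith)
  have hu : 0 < Real.cos ((x + y)/2) := by
    apply Real.cos_pos_of_mem_Ioo
    exact ⟨by linarith, by linarith⟩
  rcases eq_or_lt_of_le h0 with hα | hα
  · -- α = 0
    rw [← hα]
    have : (0:ℝ)^2/8 * Real.sin ((x - y)/2)^2 = 0 := by ring
    rw [this]
    nlinarith
  · by_cases hxy : x = y
    · have hx : x = thetaMin α / 2 := le_antisymm hx2 (hxy ▸ hy1)
      subst hxy
      rw [hx]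
      have hd : (thetaMin α / 2 - thetaMin α / 2) / 2 = 0 := by ring
      rw [hd, Real.sin_zero, Real.cos_zero]
      have hcc : Real.cos (thetaMin α) < Real.cos (thetaMin α / 2) :=
        Real.cos_lt_cos_of_nonneg_of_le_pi (by linarith) hTpi (by linarith)
      rw [hcosT] at hcc
      have : (thetaMin α / 2 + thetaMin α / 2) / 2 = thetaMin α / 2 := by ring
      rw [this]
      nlinarith
    · have hxy' : x < y := lt_of_le_of_ne (le_trans hx2 hy1) hxy
      have hs : Real.sin ((x - y)/2) < 0 :=
        Real.sin_neg_of_neg_of_neg_pi_lt (by linarith) (by nlinarith)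
      nlinarith [sq_nonneg (Real.cos ((x + y)/2) - α/4 * Real.cos ((x - y)/2)),
        mul_pos (mul_pos hα hα) (mul_pos_of_neg_of_neg hs hs)]


lemma creaseF_uniform_pos (α : ℝ) (h0 : 0 ≤ α) (h4 : α < 4) :
    ∃ ε : ℝ, 0 < ε ∧ ∀ x y : ℝ, -(π/2) ≤ x → x ≤ thetaMin α / 2 →
      thetaMin α / 2 ≤ y → y ≤ π/2 → ε ≤ creaseF α x y := by
  have hpi := Real.pi_pos
  have hT0 : 0 < thetaMin α := Real.arccos_pos.mpr (by linarith)
  have hTpi : thetaMin α ≤ π := Real.arccos_le_pi _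
  set T := thetaMin α with hT
  have hKc : IsCompact (Set.Icc (-(π/2)) (T/2) ×ˢ Set.Icc (T/2) (π/2)) :=
    isCompact_Icc.prod isCompact_Icc
  have hKne : (Set.Icc (-(π/2)) (T/2) ×ˢ Set.Icc (T/2) (π/2)).Nonempty :=
    ⟨(T/2, T/2), ⟨⟨by linarith, le_refl _⟩, ⟨le_refl _, by linarith⟩⟩⟩
  have hcont : ContinuousOn (fun p : ℝ × ℝ => creaseF α p.1 p.2)
      (Set.Icc (-(π/2)) (T/2) ×ˢ Set.Icc (T/2) (π/2)) := by
    apply Continuous.continuousOn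
    unfold creaseF
    fun_prop
  obtain ⟨z, hzK, hzmin⟩ := hKc.exists_isMinOn hKne hcont
  refine ⟨creaseF α z.1 z.2,
    creaseF_pos α h0 h4 hzK.1.1 hzK.1.2 hzK.2.1 hzK.2.2, ?_⟩
  intro x y hx1 hx2 hy1 hy2
  exact isMinOn_iff.mp hzmin (x, y) ⟨⟨hx1, hx2⟩, ⟨hy1, hy2⟩⟩

set_option maxHeartbeats 1000000 in
/-- for `α ∈ [0,4)` the crease energy is strictly positive. -/
theorem crease_energy_pos (α : ℝ) (hα : α ∈ Set.Ico (0 : ℝ) 4) :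
    0 < crease α := by
  obtain ⟨h0, h4⟩ := hα
  have hpi := Real.pi_pos
  have hT0 : 0 < thetaMin α := Real.arccos_pos.mpr (by linarith)
  obtain ⟨ε, hεpos, hεmin⟩ := creaseF_uniform_pos α h0 h4
  have hlow : ENNReal.ofReal ε ≤ crease α := by
    apply le_sInf
    rintro c ⟨N, θ, hmem, hbc, rfl⟩
    have hN1 : θ ((N:ℤ) + 1) = thetaMin α := by
      have := hbc ((N:ℤ)+1) (by rw [abs_of_nonneg (by positivity)]; linarith)
      rw [this, Int.sign_eq_one_iff_pos.mpr (by positivity)]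
      norm_num
    have hN2 : θ (-((N:ℤ) + 1)) = -thetaMin α := by
      have := hbc (-((N:ℤ)+1)) (by rw [abs_neg, abs_of_nonneg (by positivity)]; linarith)
      rw [this, Int.sign_eq_neg_one_iff_neg.mpr (by omega)]
      norm_num
    obtain ⟨m, ⟨hm1, hm2⟩, hmle⟩ := Int.exists_least_of_bdd
      (P := fun i => thetaMin α / 2 ≤ θ i ∧ -((N:ℤ)+1) ≤ i)
      ⟨-((N:ℤ)+1), fun z hz => hz.2⟩
      ⟨(N:ℤ)+1, by refine ⟨?_, by omega⟩; rw [hN1]; linarith⟩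
    have hmne : m ≠ -((N:ℤ)+1) := by
      intro h
      rw [h, hN2] at hm1
      linarith
    have hm1' : -((N:ℤ)+1) ≤ m - 1 := by omega
    have hprev' : θ (m-1) < thetaMin α / 2 := by
      by_contra h
      have := hmle (m-1) ⟨le_of_not_gt h, hm1'⟩
      omega
    have hsum : creaseSummand α θ (m-1) = creaseF α (θ (m-1)) (θ m) := by
      unfold creaseSummand creaseF
      rw [show m - 1 + 1 = m by ring]
    have hεle : ε ≤ creaseSummand α θ (m-1) := by
      rw [hsum]
      exact hεmin _ _ (hmem (m-1)).1 (le_of_lt hprev') hm1 (hmem m).2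
    calc ENNReal.ofReal ε ≤ ENNReal.ofReal (creaseSummand α θ (m-1)) :=
          ENNReal.ofReal_le_ofReal hεle
      _ ≤ creaseSum α θ := ENNReal.le_tsum _
  exact lt_of_lt_of_le (ENNReal.ofReal_pos.mpr hεpos) hlow
end
end

section
/- For every α ∈ [0,4) the crease energy satisfies the upper bound C_α ≤ (4 − α) − (4 − α)²/8; in particular C_α → 0 as α → 4⁻. -/
open Real MeasureTheory Filter Topology
open scoped ENNReal

noncomputable section

lemma crease_le_aux (α : ℝ) (hα : α ∈ Set.Ico (0 : ℝ) 4) :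
    crease α ≤ ENNReal.ofReal (2 - α / 2) := by
  obtain ⟨h0, h4⟩ := hα
  set t := thetaMin α with ht
  set θ : ℤ → ℝ := fun i => (i.sign : ℝ) * t with hθ
  have hct : Real.cos t = α / 4 := Real.cos_arccos (by linarith) (by linarith)
  have htnn : 0 ≤ t := Real.arccos_nonneg _
  have htle : t ≤ π / 2 := Real.arccos_le_pi_div_two.2 (by linarith)
  -- the two key cosine values
  have hcos2 : Real.cos (t + t) = α ^ 2 / 8 - 1 := by
    rw [Real.cos_add]
    have := Real.sin_sq_add_cos_sq t
    nlinarith [this, hct]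
  -- the summand values
  have hsummand : ∀ i : ℤ,
      creaseSummand α θ i = if i = -1 ∨ i = 0 then 1 - α / 4 else 0 := by
    intro i
    rcases lt_trichotomy i (-1) with h | h | h
    · -- i ≤ -2 : sign i = -1, sign (i+1) = -1
      have h1 : i.sign = -1 := Int.sign_eq_neg_one_of_neg (by omega)
      have h2 : (i + 1).sign = -1 := Int.sign_eq_neg_one_of_neg (by omega)
      have : ¬ (i = -1 ∨ i = 0) := by omega
      simp only [creaseSummand, hθ, h1, h2, this, if_false]
      push_cast
      rw [show (-1 : ℝ) * t + -1 * t = -(t + t) by ring, Real.cos_neg,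
        show (-1 : ℝ) * t = -t by ring, Real.cos_neg, hcos2, hct]
      ring
    · -- i = -1
      subst h
      simp only [creaseSummand, hθ]
      norm_num [Int.sign_zero]
      rw [hct]
      ring
    · rcases lt_trichotomy i 0 with h' | h' | h'
      · omega
      · -- i = 0
        subst h'
        simp only [creaseSummand, hθ]
        rw [show ((0 : ℤ).sign : ℝ) = 0 by norm_num,
          show (((0 : ℤ) + 1).sign : ℝ) = 1 by norm_num,
          show (0 : ℝ) * t + 1 * t = t by ring,
          show (0 : ℝ) * t = 0 by ring, show (1 : ℝ) * t = t by ring,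
          hct, Real.cos_zero]
        norm_num
        ring
      · -- i ≥ 1 : sign i = 1, sign (i+1) = 1
        have h1 : i.sign = 1 := Int.sign_eq_one_of_pos h'
        have h2 : (i + 1).sign = 1 := Int.sign_eq_one_of_pos (by omega)
        have hni : ¬ (i = -1 ∨ i = 0) := by omega
        simp only [creaseSummand, hθ, h1, h2, hni, if_false]
        push_cast
        rw [show (1 : ℝ) * t + 1 * t = t + t by ring,
          show (1 : ℝ) * t = t by ring, hcos2, hct]
        ring
  -- evaluate the sum
  have hsum : creaseSum α θ = ENNReal.ofReal (2 - α / 2) := by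
    rw [creaseSum]
    have hz : ∀ i ∉ ({-1, 0} : Finset ℤ),
        ENNReal.ofReal (creaseSummand α θ i) = 0 := by
      intro i hi
      simp only [Finset.mem_insert, Finset.mem_singleton] at hi
      rw [hsummand i, if_neg (by tauto)]
      simp
    rw [tsum_eq_sum hz, Finset.sum_pair (by decide : (-1 : ℤ) ≠ 0)]
    rw [hsummand (-1), hsummand 0, if_pos (Or.inl rfl), if_pos (Or.inr rfl),
      ← ENNReal.ofReal_add (by linarith) (by linarith)]
    ring_nf
  -- conclude
  refine sInf_le ?_
  refine ⟨0, θ, ?_, ?_, hsum.symm⟩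
  · intro i
    have hs : (i.sign : ℝ) = -1 ∨ (i.sign : ℝ) = 0 ∨ (i.sign : ℝ) = 1 := by
      rcases lt_trichotomy i 0 with h | h | h
      · left; rw [Int.sign_eq_neg_one_of_neg h]; norm_num
      · right; left; subst h; norm_num
      · right; right; rw [Int.sign_eq_one_of_pos h]; norm_num
    have hπ : 0 < π := Real.pi_pos
    rcases hs with h | h | h <;> simp only [hθ, h] <;> constructor <;> nlinarith
  · intro i _
    rfl

/-- for every `α ∈ [0,4)`, `C_α ≤ (4 − α) − (4 − α)²/8`; in particular
`C_α → 0` as `α → 4⁻`. -/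
theorem crease_energy_upper_bound :
    (∀ α ∈ Set.Ico (0 : ℝ) 4,
      crease α ≤ ENNReal.ofReal ((4 - α) - (4 - α) ^ 2 / 8)) ∧
    Filter.Tendsto crease (𝓝[<] (4 : ℝ)) (𝓝 (0 : ℝ≥0∞)) := by
  constructor
  · intro α hα
    refine le_trans (crease_le_aux α hα) (ENNReal.ofReal_le_ofReal ?_)
    obtain ⟨h0, h4⟩ := hα
    nlinarith
  · have hub : Tendsto (fun α : ℝ => ENNReal.ofReal (2 - α / 2)) (𝓝[<] (4 : ℝ))
        (𝓝 (0 : ℝ≥0∞)) := by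
      have hc : Continuous fun α : ℝ => ENNReal.ofReal (2 - α / 2) :=
        ENNReal.continuous_ofReal.comp (by continuity)
      have h2 : Tendsto (fun α : ℝ => ENNReal.ofReal (2 - α / 2)) (𝓝[<] (4 : ℝ))
          (𝓝 (ENNReal.ofReal (2 - 4 / 2))) :=
        (hc.tendsto 4).mono_left nhdsWithin_le_nhds
      norm_num at h2
      exact h2
    refine tendsto_of_tendsto_of_tendsto_of_le_of_le'
      (tendsto_const_nhds : Tendsto (fun _ : ℝ => (0 : ℝ≥0∞)) _ _) hub
      (Eventually.of_forall fun _ => zero_le) ?_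
    filter_upwards [Ioo_mem_nhdsLT_of_mem
      (⟨by norm_num, le_refl (4 : ℝ)⟩ : (4 : ℝ) ∈ Set.Ioc (3 : ℝ) 4)] with α hα
    exact crease_le_aux α ⟨by linarith [hα.1], hα.2⟩

end
end
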